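/- Let g and h be partial term graphs over Σ_⊥ and d < ω. If g ≤⊥r h and the ⊥-depth of g (the minimum depth of a ⊥-labelled node of g, ω if none) is at least d, then the rigid truncations of g and h at depth d are isomorphic: g†d ≅ h†d. -/

import Mathlib

set_option autoImplicit false

namespace TGR

/-- A signature: a type of symbols, each with a finite arity. -/
structure Signature where
  Sym : Type
  ar : Sym → ℕ

/-- The signature `Σ_⊥`: `Σ` extended by a fresh nullary symbol `⊥` (here `none`). -/
def Signature.bot (S : Signature) : Signature where
  Sym := Option S.Sym
  ar := fun o => match o with
    | none => 0
    | some f => S.ar f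

/-- A rooted graph over a signature `S` with nodes `N`: a labelling, a successor
function respecting arities, and a root node. -/
structure TermGraph (S : Signature) (N : Type) where
  lab : N → S.Sym
  suc : (n : N) → Fin (S.ar (lab n)) → N
  root : N

namespace TermGraph

variable {S : Signature} {N M K : Type}

/-- `g.IsPos π n`: `π` is a position (path of successor indices from the root) of node `n`. -/
inductive IsPos (g : TermGraph S N) : List ℕ → N → Prop
  | root : IsPos g [] g.root
  | step {π : List ℕ} {n : N} (h : IsPos g π n) (i : Fin (S.ar (g.lab n))) :
      IsPos g (π ++ [(i : ℕ)]) (g.suc n i)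

/-- All nodes are reachable from the root. -/
def Reachable (g : TermGraph S N) : Prop :=
  ∀ n : N, ∃ π : List ℕ, g.IsPos π n

/-- The set of positions of `g`. -/
def pos (g : TermGraph S N) : Set (List ℕ) :=
  {π | ∃ n : N, g.IsPos π n}

/-- The set of positions of node `n` in `g`. -/
def nodePos (g : TermGraph S N) (n : N) : Set (List ℕ) :=
  {π | g.IsPos π n}

/-- `π ∼_g π'`: `π` and `π'` are positions of the same node. -/
def Aliases (g : TermGraph S N) (π π' : List ℕ) : Prop :=
  ∃ n : N, g.IsPos π n ∧ g.IsPos π' n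

/-- A position is acyclic if it passes no node twice. -/
def IsAcyclicPos (g : TermGraph S N) (π : List ℕ) : Prop :=
  ∀ (π₁ π₂ : List ℕ) (n : N), π₁ <+: π₂ → π₂ <+: π →
    g.IsPos π₁ n → g.IsPos π₂ n → π₁ = π₂

/-- The set of acyclic positions of node `n` in `g`. -/
def nodePosAcy (g : TermGraph S N) (n : N) : Set (List ℕ) :=
  {π | g.IsPos π n ∧ g.IsAcyclicPos π}

/-- The set of acyclic positions of `g`. -/
def posAcy (g : TermGraph S N) : Set (List ℕ) :=
  {π | (∃ n : N, g.IsPos π n) ∧ g.IsAcyclicPos π}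

/-- The depth of a node: the minimal length of its positions. -/
noncomputable def depth (g : TermGraph S N) (n : N) : ℕ :=
  sInf {k : ℕ | ∃ π : List ℕ, g.IsPos π n ∧ π.length = k}

open Classical in
/-- The (unique) node at a position. -/
noncomputable def nodeAt (g : TermGraph S N) (π : List ℕ) : N :=
  if h : ∃ n : N, g.IsPos π n then h.choose else g.root

/-- The label `g(π)` at a position. -/
noncomputable def labAt (g : TermGraph S N) (π : List ℕ) : S.Sym :=
  g.lab (g.nodeAt π)

/-- `Δ`-homomorphism: root, labelling and successor conditions, the latter two
suspended on `Δ`-labelled nodes. -/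
structure IsDHom (Δ : Set S.Sym) (g : TermGraph S N) (h : TermGraph S M)
    (φ : N → M) : Prop where
  root_eq : φ g.root = h.root
  lab_eq : ∀ n : N, g.lab n ∉ Δ → h.lab (φ n) = g.lab n
  suc_eq : ∀ n : N, g.lab n ∉ Δ → ∀ (i : ℕ) (hi : i < S.ar (g.lab n))
      (hi' : i < S.ar (h.lab (φ n))),
      φ (g.suc n ⟨i, hi⟩) = h.suc (φ n) ⟨i, hi'⟩

/-- Rigidity: `Pa_g(n) = Pa_h(φ n)` for all non-`Δ`-labelled nodes `n`. -/
def IsRigid (Δ : Set S.Sym) (g : TermGraph S N) (h : TermGraph S M)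
    (φ : N → M) : Prop :=
  ∀ n : N, g.lab n ∉ Δ → g.nodePosAcy n = h.nodePosAcy (φ n)

/-- Rigid `Δ`-homomorphism. -/
def IsRigidDHom (Δ : Set S.Sym) (g : TermGraph S N) (h : TermGraph S M)
    (φ : N → M) : Prop :=
  IsDHom Δ g h φ ∧ IsRigid Δ g h φ

/-- Isomorphism of term graphs: a homomorphism with an inverse homomorphism. -/
def Iso (g : TermGraph S N) (h : TermGraph S M) : Prop :=
  ∃ (φ : N → M) (ψ : M → N), IsDHom ∅ g h φ ∧ IsDHom ∅ h g ψ ∧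
    (∀ n : N, ψ (φ n) = n) ∧ (∀ m : M, φ (ψ m) = m)

/-- A partial term graph (over `Σ_⊥`) is total if no node is labelled `⊥`. -/
def Total (g : TermGraph S.bot N) : Prop := ∀ n : N, g.lab n ≠ none

/-- Rigid `⊥`-homomorphism between partial term graphs. -/
def IsRigidBotHom (g : TermGraph S.bot N) (h : TermGraph S.bot M)
    (φ : N → M) : Prop :=
  IsRigidDHom ({none} : Set (Option S.Sym)) g h φ

/-- The `⊥`-depth of a partial term graph: the minimal depth of a `⊥`-labelled
node, `ω` (`⊤`) if there is none. -/
noncomputable def botDepth (g : TermGraph S.bot N) : ℕ∞ :=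
  sInf {d : ℕ∞ | ∃ n : N, g.lab n = none ∧ (g.depth n : ℕ∞) = d}

/-- `m` is an acyclic predecessor of `n`: some acyclic position `π ++ [i]` of `n`
has `π` a position of `m`. -/
def acyPred (g : TermGraph S N) (n : N) : Set N :=
  {m | ∃ (π : List ℕ) (i : ℕ), (π ++ [i]) ∈ g.nodePosAcy n ∧ g.IsPos π m}

/-- Retained nodes of the truncation at depth `d`: the least set of nodes
containing all nodes of depth `< d` and closed under acyclic predecessors. -/
inductive Retained (g : TermGraph S N) (d : ℕ) : N → Prop
  | shallow {n : N} : g.depth n < d → Retained g d n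
  | pred {n m : N} : Retained g d n → m ∈ g.acyPred n → Retained g d m

theorem not_retained_zero {g : TermGraph S N} (n : N) : ¬ g.Retained 0 n := by
  intro h
  induction h with
  | shallow hd => exact Nat.not_lt_zero _ hd
  | pred _ _ ih => exact ih

/-- Fringe nodes of the truncation at depth `d` (a pair `(n, i)` stands for the
fresh node `n^i`); at depth `0` the fringe is just (a copy of) the root. -/
def IsFringe (g : TermGraph S.bot N) (d : ℕ) (p : N × ℕ) : Prop :=
  if d = 0 then p = (g.root, 0)
  else g.Retained d p.1 ∧ ∃ h : p.2 < S.bot.ar (g.lab p.1),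
    (¬ g.Retained d (g.suc p.1 ⟨p.2, h⟩) ∨
      (d - 1 ≤ g.depth p.1 ∧ p.1 ∉ g.acyPred (g.suc p.1 ⟨p.2, h⟩)))

/-- The node set of the rigid truncation: retained nodes plus fringe nodes. -/
def TNode (g : TermGraph S.bot N) (d : ℕ) : Type :=
  {x : N ⊕ (N × ℕ) // Sum.elim (g.Retained d) (g.IsFringe d) x}

def truncLab (g : TermGraph S.bot N) (d : ℕ) (x : TNode g d) : S.bot.Sym :=
  Sum.elim (fun n => g.lab n) (fun _ => none) x.1

open Classical in
noncomputable def truncSuc (g : TermGraph S.bot N) (d : ℕ) :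
    (x : TNode g d) → Fin (S.bot.ar (truncLab g d x)) → TNode g d
  | ⟨Sum.inl n, hn⟩ => fun i =>
      if hf : g.IsFringe d (n, (i : ℕ)) then ⟨Sum.inr (n, (i : ℕ)), hf⟩
      else
        ⟨Sum.inl (g.suc n ⟨(i : ℕ), i.isLt⟩), by
          show g.Retained d (g.suc n ⟨(i : ℕ), i.isLt⟩)
          rcases Nat.eq_zero_or_pos d with hd | hd
          · subst hd
            exact ((not_retained_zero n) hn).elim
          · by_contra hc
            apply hf
            show g.IsFringe d (n, (i : ℕ))
            unfold IsFringe
            rw [if_neg (Nat.pos_iff_ne_zero.mp hd)]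
            exact ⟨hn, i.isLt, Or.inl hc⟩⟩
  | ⟨Sum.inr p, hp⟩ => fun i => absurd i.isLt (Nat.not_lt_zero _)

noncomputable def truncRoot (g : TermGraph S.bot N) (d : ℕ) : TNode g d :=
  if hd : d = 0 then
    ⟨Sum.inr (g.root, 0), by
      subst hd
      show g.IsFringe 0 (g.root, 0)
      simp [IsFringe]⟩
  else
    ⟨Sum.inl g.root, by
      show g.Retained d g.root
      exact Retained.shallow (lt_of_le_of_lt
        (Nat.sInf_le ⟨[], IsPos.root, rfl⟩) (Nat.pos_of_ne_zero hd))⟩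

/-- The rigid truncation `g†d` of a partial term graph at finite depth `d`. -/
noncomputable def trunc (g : TermGraph S.bot N) (d : ℕ) :
    TermGraph S.bot (TNode g d) where
  lab := truncLab g d
  suc := truncSuc g d
  root := truncRoot g d

end TermGraph

/-- A canonical term graph: a term graph whose nodes are sets of positions,
each node being exactly its set of positions, with all nodes reachable. -/
structure CTG (S : Signature) where
  nodes : Set (Set (List ℕ))
  tg : TermGraph S ↥nodes
  reach : tg.Reachable
  canon : ∀ n : ↥nodes, (n : Set (List ℕ)) = tg.nodePos n

namespace CTG

variable {S : Signature}

def pos (g : CTG S) : Set (List ℕ) := g.tg.pos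
def Aliases (g : CTG S) : List ℕ → List ℕ → Prop := g.tg.Aliases
def posAcy (g : CTG S) : Set (List ℕ) := g.tg.posAcy
noncomputable def labAt (g : CTG S) : List ℕ → S.Sym := g.tg.labAt

/-- A canonical partial term graph is total if it has no `⊥`-labelled node. -/
def Total (g : CTG S.bot) : Prop := g.tg.Total

/-- The rigid partial order `g ≤⊥r h`: there is a rigid `⊥`-homomorphism
from `g` to `h`. -/
def LeR (g h : CTG S.bot) : Prop :=
  ∃ φ, TermGraph.IsRigidBotHom g.tg h.tg φ

noncomputable def botDepth (g : CTG S.bot) : ℕ∞ := g.tg.botDepth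

/-- `TruncIso g h d`: the rigid truncations of `g` and `h` at depth `d ≤ ω`
are isomorphic (`g†ω = g`). -/
def TruncIso {N M : Type} (g : TermGraph S.bot N) (h : TermGraph S.bot M)
    (d : ℕ∞) : Prop :=
  (d = ⊤ → TermGraph.Iso g h) ∧
  ∀ k : ℕ, d = (k : ℕ∞) → TermGraph.Iso (g.trunc k) (h.trunc k)

/-- The rigid similarity `sim†(g,h)`: the maximal `d ≤ ω` such that
`g†d ≅ h†d`. -/
noncomputable def simr (g h : CTG S.bot) : ℕ∞ :=
  sSup {d : ℕ∞ | TruncIso g.tg h.tg d}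

open Classical in
/-- The rigid distance `d†(g,h) = 2^{-sim†(g,h)}` (with `2^{-ω} = 0`). -/
noncomputable def rdist (g h : CTG S.bot) : ℝ :=
  if simr g h = ⊤ then 0 else (1 / 2 : ℝ) ^ (simr g h).toNat

def IsUB (A : Set (CTG S.bot)) (u : CTG S.bot) : Prop := ∀ g ∈ A, LeR g u

def IsLubR (A : Set (CTG S.bot)) (u : CTG S.bot) : Prop :=
  IsUB A u ∧ ∀ v, IsUB A v → LeR u v

def IsLB (A : Set (CTG S.bot)) (l : CTG S.bot) : Prop := ∀ g ∈ A, LeR l g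

def IsGlbR (A : Set (CTG S.bot)) (l : CTG S.bot) : Prop :=
  IsLB A l ∧ ∀ m, IsLB A m → LeR m l

/-- A directed set: non-empty and every two elements have an upper bound inside. -/
def DirectedR (A : Set (CTG S.bot)) : Prop :=
  A.Nonempty ∧ ∀ g ∈ A, ∀ h ∈ A, ∃ u ∈ A, LeR g u ∧ LeR h u

/-- `L` is the limit inferior `⨆_{β<α} ⨅_{β≤ι<α} f ι` of the ordinal-indexed
sequence `(f ι)_{ι<α}` in the rigid partial order. -/
def IsLiminfR (α : Ordinal.{0}) (f : Ordinal.{0} → CTG S.bot) (L : CTG S.bot) : Prop :=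
  ∃ inf : Ordinal.{0} → CTG S.bot,
    (∀ β < α, IsGlbR {g | ∃ ι, β ≤ ι ∧ ι < α ∧ g = f ι} (inf β)) ∧
    IsLubR {g | ∃ β < α, g = inf β} L

/-- Cauchy condition for an ordinal-indexed sequence w.r.t. the rigid distance. -/
def OrdCauchy (α : Ordinal.{0}) (f : Ordinal.{0} → CTG S.bot) : Prop :=
  ∀ ε : ℝ, 0 < ε → ∃ β < α, ∀ ι ι' : Ordinal.{0},
    β < ι → ι < ι' → ι' < α → rdist (f ι) (f ι') < ε

/-- Convergence of an ordinal-indexed sequence to `g` w.r.t. the rigid distance. -/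
def OrdTendsto (α : Ordinal.{0}) (f : Ordinal.{0} → CTG S.bot) (g : CTG S.bot) : Prop :=
  ∀ ε : ℝ, 0 < ε → ∃ β < α, ∀ ι : Ordinal.{0}, β < ι → ι < α → rdist (f ι) g < ε

/-- `u` is the unravelling of `g`: the term tree with the same positions and
labels as `g` and trivial aliasing. -/
def IsUnravelling (g u : CTG S) : Prop :=
  u.pos = g.pos ∧ (∀ π ∈ g.pos, u.labAt π = g.labAt π) ∧
  (∀ π π' : List ℕ, u.Aliases π π' ↔ (π ∈ g.pos ∧ π = π'))

end CTG

/-- A labelled quotient tree over a signature `S`. -/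
structure LQT (S : Signature) where
  P : Set (List ℕ)
  nonempty : P.Nonempty
  l : List ℕ → S.Sym
  rel : List ℕ → List ℕ → Prop
  rel_refl : ∀ π ∈ P, rel π π
  rel_symm : ∀ π π' : List ℕ, rel π π' → rel π' π
  rel_trans : ∀ π π' π'' : List ℕ, rel π π' → rel π' π'' → rel π π''
  rel_mem : ∀ π π' : List ℕ, rel π π' → π ∈ P ∧ π' ∈ P
  reach_mem : ∀ (π : List ℕ) (i : ℕ), π ++ [i] ∈ P → π ∈ P
  reach_ar : ∀ (π : List ℕ) (i : ℕ), π ++ [i] ∈ P → i < S.ar (l π)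
  congr_lab : ∀ π π' : List ℕ, rel π π' → l π = l π'
  congr_suc : ∀ (π π' : List ℕ) (i : ℕ), rel π π' → i < S.ar (l π) →
    rel (π ++ [i]) (π' ++ [i])

end TGR

namespace TGR

namespace TermGraph

variable {S : Signature} {N M : Type} {g : TermGraph S N}

theorem isPos_nil_inv {n : N} (hp : g.IsPos [] n) : n = g.root := by
  generalize hρ : ([] : List ℕ) = ρ at hp
  cases hp with
  | root => rfl
  | step h i => simp at hρ

theorem isPos_concat_inv {π : List ℕ} {i : ℕ} {n : N} (hp : g.IsPos (π ++ [i]) n) :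
    ∃ (m : N) (hi : i < S.ar (g.lab m)), g.IsPos π m ∧ n = g.suc m ⟨i, hi⟩ := by
  generalize hρ : π ++ [i] = ρ at hp
  cases hp with
  | root => simp at hρ
  | @step π' m h j =>
    obtain ⟨h1, h2⟩ := List.append_inj' hρ rfl
    subst h1
    simp at h2
    exact ⟨m, h2 ▸ j.isLt, h, by subst h2; rfl⟩

theorem isPos_unique {π : List ℕ} {n n' : N} (h1 : g.IsPos π n) (h2 : g.IsPos π n') :
    n = n' := by
  induction π using List.reverseRecOn generalizing n n' with
  | nil => rw [isPos_nil_inv h1, isPos_nil_inv h2]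
  | append_singleton π i ih =>
    obtain ⟨m, hi, hm, rfl⟩ := isPos_concat_inv h1
    obtain ⟨m', hi', hm', rfl⟩ := isPos_concat_inv h2
    cases ih hm hm'
    rfl

theorem isPos_replace {α α' β : List ℕ} {m n : N} (hm : g.IsPos α m) (hm' : g.IsPos α' m)
    (hn : g.IsPos (α ++ β) n) : g.IsPos (α' ++ β) n := by
  induction β using List.reverseRecOn generalizing n with
  | nil =>
    rw [List.append_nil] at hn ⊢
    cases isPos_unique hm hn
    exact hm'
  | append_singleton γ j ih =>
    rw [← List.append_assoc] at hn ⊢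
    obtain ⟨q, hj, hq, rfl⟩ := isPos_concat_inv hn
    exact (ih hq).step ⟨j, hj⟩

theorem isPrefix_acyclic {σ π : List ℕ} (hσ : σ <+: π) (hπ : g.IsAcyclicPos π) :
    g.IsAcyclicPos σ :=
  fun π₁ π₂ n h12 h2σ h1 h2 => hπ π₁ π₂ n h12 (h2σ.trans hσ) h1 h2

theorem isPos_prefix {σ π : List ℕ} {n : N} (hp : g.IsPos π n) (hσ : σ <+: π) :
    ∃ m : N, g.IsPos σ m := by
  induction hp with
  | root => exact ⟨g.root, (List.prefix_nil.mp hσ) ▸ IsPos.root⟩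
  | @step π' m h i ih =>
    rcases List.prefix_concat_iff.mp hσ with rfl | hσ'
    · exact ⟨_, h.step i⟩
    · exact ih hσ'

theorem exists_acyclic_pos_aux (k : ℕ) : ∀ {π : List ℕ} {n : N}, π.length = k → g.IsPos π n →
    ∃ σ, g.IsPos σ n ∧ g.IsAcyclicPos σ ∧ σ.length ≤ π.length := by
  induction k using Nat.strong_induction_on with
  | _ k ih =>
  intro π n hk hp
  by_cases hacy : g.IsAcyclicPos π
  · exact ⟨π, hp, hacy, le_rfl⟩
  · simp only [IsAcyclicPos, not_forall] at hacy
    obtain ⟨π₁, π₂, m, h12, h2π, h1, h2, hne⟩ := hacy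
    obtain ⟨rest, rfl⟩ := h2π
    have hrep : g.IsPos (π₁ ++ rest) n := isPos_replace h2 h1 hp
    have hlt : π₁.length < π₂.length :=
      lt_of_le_of_ne h12.length_le (fun he => hne (h12.eq_of_length he))
    have hlen : (π₁ ++ rest).length < (π₂ ++ rest).length := by
      simp only [List.length_append]; omega
    obtain ⟨σ, hσ1, hσ2, hσ3⟩ := ih _ (hk ▸ hlen) rfl hrep
    exact ⟨σ, hσ1, hσ2, le_trans hσ3 (le_of_lt hlen)⟩

/-- Every position can be shortened to an acyclic position of the same node. -/
theorem exists_acyclic_pos {π : List ℕ} {n : N} (hp : g.IsPos π n) :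
    ∃ σ, g.IsPos σ n ∧ g.IsAcyclicPos σ ∧ σ.length ≤ π.length :=
  exists_acyclic_pos_aux π.length rfl hp

theorem depth_le {π : List ℕ} {n : N} (hp : g.IsPos π n) : g.depth n ≤ π.length :=
  Nat.sInf_le ⟨π, hp, rfl⟩

theorem exists_pos_depth {n : N} (hn : ∃ π, g.IsPos π n) :
    ∃ π, g.IsPos π n ∧ g.IsAcyclicPos π ∧ π.length = g.depth n := by
  obtain ⟨π₀, hπ₀⟩ := hn
  have hne : {k : ℕ | ∃ π : List ℕ, g.IsPos π n ∧ π.length = k}.Nonempty := ⟨_, π₀, hπ₀, rfl⟩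
  obtain ⟨π, hπ, hlen⟩ := Nat.sInf_mem hne
  obtain ⟨σ, hσ1, hσ2, hσ3⟩ := exists_acyclic_pos hπ
  have hd : g.depth n = π.length := hlen.symm
  exact ⟨σ, hσ1, hσ2, le_antisymm (hd.symm ▸ hσ3) (depth_le hσ1)⟩

theorem depth_suc_le {n : N} (hn : ∃ π, g.IsPos π n) (i : Fin (S.ar (g.lab n))) :
    g.depth (g.suc n i) ≤ g.depth n + 1 := by
  obtain ⟨π, hπ, -, hlen⟩ := exists_pos_depth hn
  have := depth_le (hπ.step i)
  simpa [hlen] using this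

end TermGraph
namespace TermGraph

section Transfer

variable {S : Signature} {N M : Type} {g : TermGraph S.bot N} {h : TermGraph S.bot M}
  {φ : N → M} {d : ℕ}

theorem depth_bot_le (hd : (d : ℕ∞) ≤ g.botDepth) {n : N} (he : g.lab n = none) :
    d ≤ g.depth n := by
  have h1 : g.botDepth ≤ (g.depth n : ℕ∞) := sInf_le ⟨n, he, rfl⟩
  exact_mod_cast le_trans hd h1

theorem lab_ne_of_depth_lt (hd : (d : ℕ∞) ≤ g.botDepth) {n : N} (hdep : g.depth n < d) :
    g.lab n ≠ none :=
  fun he => absurd (depth_bot_le hd he) (by omega)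

theorem notin_delta {n : N} (hne : g.lab n ≠ none) :
    g.lab n ∉ ({none} : Set (Option S.Sym)) := by exact fun hm => hne (Set.mem_singleton_iff.mp hm)

theorem pos_map (hrig : IsRigid ({none} : Set (Option S.Sym)) g h φ) {n : N} (hne : g.lab n ≠ none) {π : List ℕ}
    (hp : g.IsPos π n) (hacy : g.IsAcyclicPos π) : h.IsPos π (φ n) ∧ h.IsAcyclicPos π := by
  have := hrig n (notin_delta hne)
  have hmem : π ∈ g.nodePosAcy n := ⟨hp, hacy⟩
  rw [this] at hmem
  exact hmem

theorem pos_back (hrig : IsRigid ({none} : Set (Option S.Sym)) g h φ) {n : N} (hne : g.lab n ≠ none) {π : List ℕ}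
    (hp : h.IsPos π (φ n)) (hacy : h.IsAcyclicPos π) : g.IsPos π n ∧ g.IsAcyclicPos π := by
  have := hrig n (notin_delta hne)
  have hmem : π ∈ h.nodePosAcy (φ n) := ⟨hp, hacy⟩
  rw [← this] at hmem
  exact hmem

theorem phi_inj (hrig : IsRigid ({none} : Set (Option S.Sym)) g h φ) (hg : g.Reachable) {n n' : N}
    (hn : g.lab n ≠ none) (hn' : g.lab n' ≠ none) (he : φ n = φ n') : n = n' := by
  obtain ⟨π₀, hπ₀⟩ := hg n
  obtain ⟨σ, hσ, hacy, -⟩ := exists_acyclic_pos hπ₀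
  have h1 := pos_map hrig hn hσ hacy
  rw [he] at h1
  have h2 := pos_back hrig hn' h1.1 h1.2
  exact isPos_unique hσ h2.1

theorem depth_eq (hrig : IsRigid ({none} : Set (Option S.Sym)) g h φ) (hg : g.Reachable) (hh : h.Reachable)
    {n : N} (hne : g.lab n ≠ none) : h.depth (φ n) = g.depth n := by
  apply le_antisymm
  · obtain ⟨π, hπ, hacy, hlen⟩ := exists_pos_depth (hg n)
    exact hlen ▸ depth_le (pos_map hrig hne hπ hacy).1
  · obtain ⟨π, hπ, hacy, hlen⟩ := exists_pos_depth (hh (φ n))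
    exact hlen ▸ depth_le (pos_back hrig hne hπ hacy).1

theorem acyPred_lab_ne {n m : N} (hm : m ∈ g.acyPred n) : g.lab m ≠ none := by
  obtain ⟨π, i, ⟨hpn, -⟩, hpm⟩ := hm
  obtain ⟨m₂, hi, hpm₂, -⟩ := isPos_concat_inv hpn
  cases isPos_unique hpm₂ hpm
  intro he
  rw [he] at hi
  exact Nat.not_lt_zero _ hi

theorem acyPred_map (hrig : IsRigid ({none} : Set (Option S.Sym)) g h φ) {n m : N} (hne : g.lab n ≠ none)
    (hm : m ∈ g.acyPred n) : φ m ∈ h.acyPred (φ n) := by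
  have hmne := acyPred_lab_ne hm
  obtain ⟨π, i, ⟨hpn, hacy⟩, hpm⟩ := hm
  have hπacy : g.IsAcyclicPos π := isPrefix_acyclic ⟨[i], rfl⟩ hacy
  have h1 := pos_map hrig hne hpn hacy
  have h2 := pos_map hrig hmne hpm hπacy
  exact ⟨π, i, ⟨h1.1, h1.2⟩, h2.1⟩

theorem acyPred_back (hrig : IsRigid ({none} : Set (Option S.Sym)) g h φ) {n : N} (hne : g.lab n ≠ none)
    {m' : M} (hm : m' ∈ h.acyPred (φ n)) : ∃ m ∈ g.acyPred n, φ m = m' := by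
  obtain ⟨π, i, ⟨hpn', hacy'⟩, hpm'⟩ := hm
  obtain ⟨hpg, hacyg⟩ := pos_back hrig hne hpn' hacy'
  obtain ⟨u, hi, hpu, -⟩ := isPos_concat_inv hpg
  have hune : g.lab u ≠ none := fun he => by rw [he] at hi; exact Nat.not_lt_zero _ hi
  have hπacy : g.IsAcyclicPos π := isPrefix_acyclic ⟨[i], rfl⟩ hacyg
  have h2 := pos_map hrig hune hpu hπacy
  exact ⟨u, ⟨π, i, ⟨hpg, hacyg⟩, hpu⟩, isPos_unique h2.1 hpm'⟩

theorem retained_lab_ne (hd : (d : ℕ∞) ≤ g.botDepth) {n : N} (hr : g.Retained d n) :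
    g.lab n ≠ none := by
  induction hr with
  | shallow hdep => exact lab_ne_of_depth_lt hd hdep
  | pred _ hm _ => exact acyPred_lab_ne hm

theorem retained_map (hrig : IsRigid ({none} : Set (Option S.Sym)) g h φ) (hg : g.Reachable) (hh : h.Reachable)
    (hd : (d : ℕ∞) ≤ g.botDepth) {n : N} (hr : g.Retained d n) : h.Retained d (φ n) := by
  induction hr with
  | @shallow n hdep =>
    exact Retained.shallow (by
      rw [depth_eq hrig hg hh (lab_ne_of_depth_lt hd hdep)]; exact hdep)
  | @pred n m hr' hm ih =>
    exact Retained.pred ih (acyPred_map hrig (retained_lab_ne hd hr') hm)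

theorem pos_lift (hom : IsDHom ({none} : Set (Option S.Sym)) g h φ) (hd : (d : ℕ∞) ≤ g.botDepth)
    {π : List ℕ} {m' : M} (hp : h.IsPos π m') (hlen : π.length ≤ d) :
    ∃ n, g.IsPos π n ∧ φ n = m' := by
  induction hp with
  | root => exact ⟨g.root, IsPos.root, hom.root_eq⟩
  | @step π m' hp i ih =>
    rw [List.length_append, List.length_cons, List.length_nil] at hlen
    obtain ⟨n, hn, rfl⟩ := ih (by omega)
    have hne : g.lab n ≠ none :=
      lab_ne_of_depth_lt hd (lt_of_le_of_lt (depth_le hn) (by omega))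
    have hlab := hom.lab_eq n (notin_delta hne)
    have hi : (i : ℕ) < S.bot.ar (g.lab n) := hlab ▸ i.isLt
    refine ⟨g.suc n ⟨i, hi⟩, hn.step ⟨i, hi⟩, ?_⟩
    rw [hom.suc_eq n (notin_delta hne) i hi i.isLt]

theorem retained_back (hom : IsDHom ({none} : Set (Option S.Sym)) g h φ) (hrig : IsRigid ({none} : Set (Option S.Sym)) g h φ)
    (hg : g.Reachable) (hh : h.Reachable) (hd : (d : ℕ∞) ≤ g.botDepth)
    {m' : M} (hr : h.Retained d m') : ∃ n, g.Retained d n ∧ φ n = m' := by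
  induction hr with
  | @shallow m' hdep =>
    obtain ⟨π, hπ, -, hlen⟩ := exists_pos_depth (hh m')
    obtain ⟨n, hn, hφn⟩ := pos_lift hom hd hπ (by omega)
    exact ⟨n, Retained.shallow (lt_of_le_of_lt (depth_le hn) (by omega)), hφn⟩
  | @pred m' k' hr' hk ih =>
    obtain ⟨a, ha, rfl⟩ := ih
    obtain ⟨u, hu, hφu⟩ := acyPred_back hrig (retained_lab_ne hd ha) hk
    exact ⟨u, Retained.pred ha hu, hφu⟩

end Transfer

end TermGraph
namespace TermGraph

section Fringe

variable {S : Signature} {N M : Type} {g : TermGraph S.bot N} {h : TermGraph S.bot M}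
  {φ : N → M} {d : ℕ}

theorem ar_pos_lab_ne {m : N} {i : ℕ} (hi : i < S.bot.ar (g.lab m)) : g.lab m ≠ none :=
  fun he => by rw [he] at hi; exact Nat.not_lt_zero _ hi

/-- The crucial impossible configuration: `suc_i n` is `⊥`-labelled in `g`, yet its
image in `h` is retained with `φ n` among its acyclic predecessors. -/
theorem bot_case (hom : IsDHom ({none} : Set (Option S.Sym)) g h φ)
    (hrig : IsRigid ({none} : Set (Option S.Sym)) g h φ)
    (hg : g.Reachable) (hh : h.Reachable) (hd : (d : ℕ∞) ≤ g.botDepth)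
    {n : N} (hn : g.Retained d n) {i : ℕ} (hi : i < S.bot.ar (g.lab n))
    (hs : g.lab (g.suc n ⟨i, hi⟩) = none)
    (hRs' : h.Retained d (φ (g.suc n ⟨i, hi⟩)))
    (hpred : φ n ∈ h.acyPred (φ (g.suc n ⟨i, hi⟩))) : False := by
  set s := g.suc n ⟨i, hi⟩ with hs_def
  have hnne : g.lab n ≠ none := retained_lab_ne hd hn
  obtain ⟨k, hk, hφk⟩ := retained_back hom hrig hg hh hd hRs'
  have hkne : g.lab k ≠ none := retained_lab_ne hd hk
  obtain ⟨π, j, ⟨hpj, hacyj⟩, hpφn⟩ := hpred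
  have hback := pos_back hrig hkne (hφk ▸ hpj) hacyj
  have hi' : (i : ℕ) < S.bot.ar (h.lab (φ n)) := by
    rw [hom.lab_eq n (notin_delta hnne)]; exact hi
  have hsuc : φ s = h.suc (φ n) ⟨i, hi'⟩ := hom.suc_eq n (notin_delta hnne) i hi hi'
  have hpi : h.IsPos (π ++ [i]) (φ s) := by
    rw [hsuc]; exact hpφn.step ⟨i, hi'⟩
  have hπacy_h : h.IsAcyclicPos π := isPrefix_acyclic ⟨[j], rfl⟩ hacyj
  have hacyi : h.IsAcyclicPos (π ++ [i]) := by
    intro σ₁ σ₂ v h12 h2 hv1 hv2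
    by_contra hne
    rcases List.prefix_concat_iff.mp h2 with rfl | h2π
    · cases isPos_unique hv2 hpi
      rcases List.prefix_concat_iff.mp h12 with rfl | h1π
      · exact hne rfl
      · have hσacy : h.IsAcyclicPos σ₁ := isPrefix_acyclic h1π hπacy_h
        have hσg := pos_back hrig hkne (hφk ▸ hv1) hσacy
        have heq := hback.2 σ₁ (π ++ [j]) k (h1π.trans ⟨[j], rfl⟩)
          List.prefix_rfl hσg.1 hback.1
        have hlen := h1π.length_le
        rw [heq] at hlen
        simp only [List.length_append, List.length_cons, List.length_nil] at hlen
        omega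
    · exact hne (hπacy_h σ₁ σ₂ v h12 h2π hv1 hv2)
  have hgi := pos_back hrig hkne (hφk ▸ hpi) hacyi
  obtain ⟨u, hju, hpu, -⟩ := isPos_concat_inv hback.1
  have hune : g.lab u ≠ none := ar_pos_lab_ne hju
  have hπacy_g : g.IsAcyclicPos π := isPrefix_acyclic ⟨[j], rfl⟩ hback.2
  have hpu_h := pos_map hrig hune hpu hπacy_g
  have hun : u = n := phi_inj hrig hg hune hnne (isPos_unique hpu_h.1 hpφn)
  subst hun
  obtain ⟨u₂, hi₂, hpu₂, hk_eq⟩ := isPos_concat_inv hgi.1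
  cases isPos_unique hpu₂ hpu
  have hks : k = s := by rw [hk_eq]
  rw [hks, hs] at hkne
  exact hkne rfl

theorem fringe_iff (hom : IsDHom ({none} : Set (Option S.Sym)) g h φ)
    (hrig : IsRigid ({none} : Set (Option S.Sym)) g h φ)
    (hg : g.Reachable) (hh : h.Reachable) (hd : (d : ℕ∞) ≤ g.botDepth)
    {n : N} (hr : g.Retained d n) (i : ℕ) :
    g.IsFringe d (n, i) ↔ h.IsFringe d (φ n, i) := by
  rcases Nat.eq_zero_or_pos d with rfl | hd0
  · exact absurd hr (not_retained_zero n)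
  have hd0' : d ≠ 0 := Nat.pos_iff_ne_zero.mp hd0
  have hnne : g.lab n ≠ none := retained_lab_ne hd hr
  have hlab : h.lab (φ n) = g.lab n := hom.lab_eq n (notin_delta hnne)
  have hRφn : h.Retained d (φ n) := retained_map hrig hg hh hd hr
  have hdep : h.depth (φ n) = g.depth n := depth_eq hrig hg hh hnne
  simp only [IsFringe, if_neg hd0']
  constructor
  · rintro ⟨-, hi, hcond⟩
    have hi' : i < S.bot.ar (h.lab (φ n)) := by rw [hlab]; exact hi
    refine ⟨hRφn, hi', ?_⟩
    have hsuc : φ (g.suc n ⟨i, hi⟩) = h.suc (φ n) ⟨i, hi'⟩ :=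
      hom.suc_eq n (notin_delta hnne) i hi hi'
    by_cases hs : g.lab (g.suc n ⟨i, hi⟩) = none
    · by_cases hRs' : h.Retained d (h.suc (φ n) ⟨i, hi'⟩)
      · right
        constructor
        · rw [hdep]
          have h1 : d ≤ g.depth (g.suc n ⟨i, hi⟩) := depth_bot_le hd hs
          have h2 := depth_suc_le (hg n) ⟨i, hi⟩
          omega
        · rw [← hsuc]
          exact fun hp => bot_case hom hrig hg hh hd hr hi hs (hsuc ▸ hRs') hp
      · exact Or.inl hRs'
    · -- successor is not ⊥-labelled
      rcases hcond with hnr | ⟨hdn, hnp⟩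
      · left
        rw [← hsuc]
        intro hc
        obtain ⟨k, hk, hφk⟩ := retained_back hom hrig hg hh hd hc
        rw [phi_inj hrig hg (retained_lab_ne hd hk) hs hφk] at hk
        exact hnr hk
      · right
        refine ⟨hdep ▸ hdn, ?_⟩
        rw [← hsuc]
        intro hc
        obtain ⟨m, hm, hφm⟩ := acyPred_back hrig hs hc
        rw [phi_inj hrig hg (acyPred_lab_ne hm) hnne hφm] at hm
        exact hnp hm
  · rintro ⟨-, hi', hcond⟩
    have hi : i < S.bot.ar (g.lab n) := by rw [← hlab]; exact hi'
    refine ⟨hr, hi, ?_⟩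
    have hsuc : φ (g.suc n ⟨i, hi⟩) = h.suc (φ n) ⟨i, hi'⟩ :=
      hom.suc_eq n (notin_delta hnne) i hi hi'
    by_cases hs : g.lab (g.suc n ⟨i, hi⟩) = none
    · left
      intro hc
      exact retained_lab_ne hd hc hs
    · rcases hcond with hnr | ⟨hdn, hnp⟩
      · left
        intro hc
        exact hnr (hsuc ▸ retained_map hrig hg hh hd hc)
      · right
        refine ⟨hdep ▸ hdn, ?_⟩
        intro hc
        exact hnp (hsuc ▸ acyPred_map hrig hs hc)
  end Fringe

end TermGraph
namespace TermGraph

theorem suc_congr {S : Signature} {N : Type} {g : TermGraph S N} {n n' : N} (e : n = n')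
    {i : ℕ} (hi : i < S.ar (g.lab n)) (hi' : i < S.ar (g.lab n')) :
    g.suc n ⟨i, hi⟩ = g.suc n' ⟨i, hi'⟩ := by subst e; rfl

theorem iso_of_inverse {S : Signature} {N M : Type} {g : TermGraph S N} {h : TermGraph S M}
    (e : N → M) (e' : M → N) (h1 : ∀ n, e' (e n) = n) (h2 : ∀ m, e (e' m) = m)
    (hom : IsDHom ∅ g h e) : Iso g h := by
  refine ⟨e, e', hom, ⟨?_, ?_, ?_⟩, h1, h2⟩
  · rw [← hom.root_eq, h1]
  · intro m _
    have := hom.lab_eq (e' m) (Set.notMem_empty _)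
    rw [h2] at this
    exact this.symm
  · intro m _ i hi hi'
    have hi'' : i < S.ar (h.lab (e (e' m))) := by rw [h2]; exact hi
    have heq := hom.suc_eq (e' m) (Set.notMem_empty _) i hi' hi''
    rw [suc_congr (h2 m) hi'' hi] at heq
    rw [← heq, h1]

theorem fringe_retained {S : Signature} {N : Type} {g : TermGraph S.bot N} {d : ℕ}
    (hd0 : d ≠ 0) {p : N × ℕ} (hf : g.IsFringe d p) : g.Retained d p.1 := by
  rw [IsFringe, if_neg hd0] at hf; exact hf.1

theorem truncRoot_val {S : Signature} {N : Type} (g : TermGraph S.bot N) (d : ℕ) :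
    (truncRoot g d).1 = if d = 0 then Sum.inr (g.root, 0) else Sum.inl g.root := by
  by_cases hd0 : d = 0 <;> simp [truncRoot, hd0]

open Classical in
theorem truncSuc_val {S : Signature} {N : Type} {g : TermGraph S.bot N} {d : ℕ}
    (x : TNode g d) {n : N} (hx : x.1 = Sum.inl n) {i : ℕ}
    (him : i < S.bot.ar (truncLab g d x)) (hi' : i < S.bot.ar (g.lab n)) :
    (truncSuc g d x ⟨i, him⟩).1 =
      if g.IsFringe d (n, i) then Sum.inr (n, i) else Sum.inl (g.suc n ⟨i, hi'⟩) := by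
  obtain ⟨v, hv⟩ := x
  simp only at hx
  subst hx
  simp only [truncSuc]
  split
  · next hf => exact congrArg Subtype.val (dif_pos hf)
  · next hf => exact congrArg Subtype.val (dif_neg hf)

section TruncHom

variable {S : Signature} {N M : Type} {g : TermGraph S.bot N} {h : TermGraph S.bot M}
  {φ : N → M} {d : ℕ}

theorem trunc_hom (hom : IsDHom ({none} : Set (Option S.Sym)) g h φ)
    (hrig : IsRigid ({none} : Set (Option S.Sym)) g h φ)
    (hg : g.Reachable) (hh : h.Reachable) (hd : (d : ℕ∞) ≤ g.botDepth)
    (Φ : TNode g d → TNode h d)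
    (hval : ∀ x, (Φ x).1 = Sum.map φ (Prod.map φ id) x.1) :
    IsDHom ∅ (g.trunc d) (h.trunc d) Φ := by
  constructor
  · -- root
    apply Subtype.ext
    rw [hval]
    show Sum.map φ (Prod.map φ id) (truncRoot g d).1 = (truncRoot h d).1
    rw [truncRoot_val, truncRoot_val]
    by_cases hd0 : d = 0 <;> simp [hd0, hom.root_eq]
  · intro x _
    obtain ⟨v, hv⟩ := x
    show truncLab h d (Φ ⟨v, hv⟩) = truncLab g d ⟨v, hv⟩
    show Sum.elim (fun n => h.lab n) (fun _ => none) (Φ ⟨v, hv⟩).1 = Sum.elim (fun n => g.lab n) (fun _ => none) v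
    refine (congrArg (Sum.elim (fun n => h.lab n) (fun _ => none)) (hval ⟨v, hv⟩)).trans ?_
    rcases v with n | p
    · exact hom.lab_eq n (notin_delta (retained_lab_ne hd hv))
    · rfl
  · intro x _ i hi hi'
    obtain ⟨v, hv⟩ := x
    rcases v with n | p
    swap
    · exact absurd hi (Nat.not_lt_zero i)
    · have hrn : g.Retained d n := hv
      have hgi : i < S.bot.ar (g.lab n) := hi
      have hlab : h.lab (φ n) = g.lab n := hom.lab_eq n (notin_delta (retained_lab_ne hd hrn))
      have hhi : i < S.bot.ar (h.lab (φ n)) := by rw [hlab]; exact hgi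
      apply Subtype.ext
      rw [hval]
      show Sum.map φ (Prod.map φ id) ((truncSuc g d (⟨Sum.inl n, hv⟩ : TNode g d) ⟨i, hi⟩).1)
        = (truncSuc h d (Φ ⟨Sum.inl n, hv⟩) ⟨i, hi'⟩).1
      rw [truncSuc_val (⟨Sum.inl n, hv⟩ : TNode g d) rfl hi hgi,
        truncSuc_val (Φ ⟨Sum.inl n, hv⟩) (by exact hval _) hi' hhi,
        ← fringe_iff hom hrig hg hh hd hrn i]
      by_cases hf : g.IsFringe d (n, i)
      · simp [hf]
      · simp only [hf, if_neg, if_false]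
        show Sum.inl (φ (g.suc n ⟨i, hgi⟩)) = Sum.inl (h.suc (φ n) ⟨i, hhi⟩)
        rw [hom.suc_eq n (notin_delta (retained_lab_ne hd hrn)) i hgi hhi]

end TruncHom

end TermGraph

/-- If `g ≤⊥r h` and the `⊥`-depth of `g` is at least `d`,
then the rigid truncations of `g` and `h` at depth `d` are isomorphic. -/
theorem leR_trunc_iso (S : Signature) (N M : Type)
    (g : TermGraph S.bot N) (h : TermGraph S.bot M)
    (hg : g.Reachable) (hh : h.Reachable) (d : ℕ)
    (hle : ∃ φ, TermGraph.IsRigidBotHom g h φ)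
    (hd : (d : ℕ∞) ≤ g.botDepth) :
    TermGraph.Iso (g.trunc d) (h.trunc d) := by
  classical
  obtain ⟨φ, hom, hrig⟩ := hle
  have phiMem : ∀ x : N ⊕ (N × ℕ), Sum.elim (g.Retained d) (g.IsFringe d) x →
      Sum.elim (h.Retained d) (h.IsFringe d) (Sum.map φ (Prod.map φ id) x) := by
    intro x hx
    rcases x with n | ⟨n, i⟩
    · exact TermGraph.retained_map hrig hg hh hd hx
    · show h.IsFringe d (φ n, i)
      rcases Nat.eq_zero_or_pos d with rfl | hd0
      · have h0 : n = g.root ∧ i = 0 := by simpa [TermGraph.IsFringe] using hx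
        obtain ⟨rfl, rfl⟩ := h0
        simp [TermGraph.IsFringe, hom.root_eq]
      · have hd0' : d ≠ 0 := Nat.pos_iff_ne_zero.mp hd0
        exact (TermGraph.fringe_iff hom hrig hg hh hd
          (TermGraph.fringe_retained hd0' hx) i).mp hx
  set Φ : TermGraph.TNode g d → TermGraph.TNode h d :=
    fun x => ⟨Sum.map φ (Prod.map φ id) x.1, phiMem x.1 x.2⟩ with hΦ
  have hval : ∀ x, (Φ x).1 = Sum.map φ (Prod.map φ id) x.1 := fun x => rfl
  have hinj : Function.Injective Φ := by
    intro x y hxy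
    apply Subtype.ext
    have hv : Sum.map φ (Prod.map φ id) x.1 = Sum.map φ (Prod.map φ id) y.1 := by
      rw [← hval, ← hval, hxy]
    obtain ⟨vx, hx⟩ := x; obtain ⟨vy, hy⟩ := y
    rcases vx with n | ⟨n, i⟩ <;> rcases vy with n' | ⟨n', i'⟩ <;>
      simp [Sum.map, Prod.map] at hv ⊢
    · exact TermGraph.phi_inj hrig hg (TermGraph.retained_lab_ne hd hx)
        (TermGraph.retained_lab_ne hd hy) hv
    · refine ⟨?_, hv.2⟩
      rcases Nat.eq_zero_or_pos d with rfl | hd0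
      · have h1 : n = g.root ∧ i = 0 := by simpa [TermGraph.IsFringe] using hx
        have h2 : n' = g.root ∧ i' = 0 := by simpa [TermGraph.IsFringe] using hy
        rw [h1.1, h2.1]
      · have hd0' : d ≠ 0 := Nat.pos_iff_ne_zero.mp hd0
        exact TermGraph.phi_inj hrig hg
          (TermGraph.retained_lab_ne hd (TermGraph.fringe_retained hd0' hx))
          (TermGraph.retained_lab_ne hd (TermGraph.fringe_retained hd0' hy)) hv.1
  have hsurj : Function.Surjective Φ := by
    rintro ⟨v, hvmem⟩
    rcases v with m' | ⟨m', i⟩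
    · obtain ⟨k, hk, hφk⟩ := TermGraph.retained_back hom hrig hg hh hd hvmem
      exact ⟨⟨Sum.inl k, hk⟩, Subtype.ext (by show Sum.map φ (Prod.map φ id) (Sum.inl k) = Sum.inl m'; simp [hφk])⟩
    · rcases Nat.eq_zero_or_pos d with rfl | hd0
      · have h0 : m' = h.root ∧ i = 0 := by simpa [TermGraph.IsFringe] using hvmem
        refine ⟨⟨Sum.inr (g.root, 0), ?_⟩, Subtype.ext ?_⟩
        · show g.IsFringe 0 _
          simp [TermGraph.IsFringe]
        · show Sum.map φ (Prod.map φ id) (Sum.inr (g.root, 0)) = Sum.inr (m', i)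
          simp [hval, Sum.map, Prod.map, hom.root_eq, h0.1, h0.2]
      · have hd0' : d ≠ 0 := Nat.pos_iff_ne_zero.mp hd0
        have hrm := TermGraph.fringe_retained hd0' hvmem
        obtain ⟨k, hk, hφk⟩ := TermGraph.retained_back hom hrig hg hh hd hrm
        have hf : g.IsFringe d (k, i) := by
          rw [TermGraph.fringe_iff hom hrig hg hh hd hk i, hφk]
          exact hvmem
        exact ⟨⟨Sum.inr (k, i), hf⟩, Subtype.ext (by show Sum.map φ (Prod.map φ id) (Sum.inr (k, i)) = Sum.inr (m', i); simp [hval, Sum.map, Prod.map, hφk])⟩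
  have homΦ := TermGraph.trunc_hom hom hrig hg hh hd Φ hval
  exact TermGraph.iso_of_inverse Φ (Function.surjInv hsurj)
    (fun x => hinj (Function.surjInv_eq hsurj (Φ x)))
    (Function.surjInv_eq hsurj) homΦ


end TGR
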